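/- Let M be a string module whose snake graph has n+1 tiles numbered 1,…,n+1 linearly along the snake. Any maximal chain in the canonical submodule lattice L(M) has length n, its edge labels i_1,…,i_n are a permutation of {1,…,n} (with tiles 1 and n+1 appropriately excluded per convention, i.e., the labels are pairwise distinct), and the product s_{i_1}⋯s_{i_n} of simple transpositions in the symmetric group S_{n+1} is a reduced expression of a Coxeter element. -/

import Mathlib

/-- A canonical submodule of the string module of a string with arrow data `s`
(`s.getD i false = true` means the `i`-th arrow is direct, pointing from vertex position
`i` to position `i + 1`; `false` means it is inverse, pointing from `i + 1` to `i`),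
described by the set `S` of vertex positions supporting it: `S` must be closed under the
arrow maps of the string module. -/
def IsCanonSub (s : List Bool) (S : Finset ℕ) : Prop :=
  (∀ i ∈ S, i < s.length + 1) ∧
  ∀ i < s.length,
    (s.getD i false = true → i ∈ S → i + 1 ∈ S) ∧
    (s.getD i false = false → i + 1 ∈ S → i ∈ S)

/-- The simple transposition `s_i = (i, i+1)` in the symmetric group on
`{0, 1, …, n + 1}` (tiles are numbered `0, …, n`, so the ambient symmetric group is
`S_{n+2}`, the symmetric group on one more letter than the number of tiles). -/
def adjTrans (n : ℕ) (i : ℕ) : Equiv.Perm (Fin (n + 2)) :=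
  Equiv.swap (Fin.ofNat (n + 2) i) (Fin.ofNat (n + 2) (i + 1))

/-- `c`, with edge labels `lab`, is a maximal chain in the canonical submodule lattice of
the string with arrow data `s` (of length `n`, so the snake graph has `n + 1` tiles
numbered `0, …, n`): it runs from the zero submodule to the whole module, each step
inserting the single position `lab k`. -/
def IsSubmodMaxChain (n : ℕ) (s : List Bool) (c : Fin (n + 2) → Finset ℕ)
    (lab : Fin (n + 1) → ℕ) : Prop :=
  c 0 = ∅ ∧ c (Fin.last (n + 1)) = Finset.range (n + 1) ∧
  (∀ k, IsCanonSub s (c k)) ∧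
  ∀ k : Fin (n + 1), lab k ∉ c k.castSucc ∧ c k.succ = insert (lab k) (c k.castSucc)

lemma adjTrans_level {n j i : ℕ} (hi : i ≤ n) (hij : i ≠ j)
    (x : Fin (n + 2)) : ((adjTrans n i x : Fin (n+2)).val ≤ j ↔ x.val ≤ j) := by
  have hvi : ((Fin.ofNat (n+2) i : Fin (n+2)) : ℕ) = i := by rw [Fin.val_ofNat]; exact Nat.mod_eq_of_lt (by omega)
  have hvi1 : ((Fin.ofNat (n+2) (i+1) : Fin (n+2)) : ℕ) = i + 1 := by rw [Fin.val_ofNat]; exact Nat.mod_eq_of_lt (by omega)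
  have fwd : ∀ y : Fin (n+2), y.val ≤ j → (adjTrans n i y).val ≤ j := by
    intro y hy
    unfold adjTrans
    by_cases h1 : y = Fin.ofNat (n+2) i
    · rw [h1, Equiv.swap_apply_left, hvi1]
      have : y.val = i := by rw [h1, hvi]
      omega
    · by_cases h2 : y = Fin.ofNat (n+2) (i+1)
      · rw [h2, Equiv.swap_apply_right, hvi]
        have : y.val = i + 1 := by rw [h2, hvi1]
        omega
      · rw [Equiv.swap_apply_of_ne_of_ne h1 h2]; exact hy
  constructor
  · intro h
    have := fwd (adjTrans n i x) h
    rwa [show adjTrans n i (adjTrans n i x) = x from Equiv.swap_apply_self _ _ _] at this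
  · exact fwd x

lemma prodLevel {n j : ℕ} (l : List ℕ) (hl : ∀ i ∈ l, i ≤ n)
    (hjl : j ∉ l) (x : Fin (n + 2)) :
    (((l.map (adjTrans n)).prod x).val ≤ j ↔ x.val ≤ j) := by
  induction l generalizing x with
  | nil => simp
  | cons a t ih =>
    simp only [List.map_cons, List.prod_cons, Equiv.Perm.mul_apply]
    rw [adjTrans_level (hl a (by simp)) (fun h => hjl (h ▸ by simp))]
    exact ih (fun i hi => hl i (by simp [hi])) (fun h => hjl (by simp [h])) x


/-- Let `M` be a string module whose snake graph has `n + 1` tiles numbered linearly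
along the snake.  Any maximal chain in the canonical submodule lattice `L(M)` has length
`n + 1`, its edge labels are pairwise distinct and form a permutation of the tile
numbers, and the corresponding product of simple transpositions is a reduced expression
of a Coxeter element of the ambient symmetric group. -/
theorem maximal_chain_gives_reduced_coxeter_word (n : ℕ) (s : List Bool)
    (hs : s.length = n) (c : Fin (n + 2) → Finset ℕ) (lab : Fin (n + 1) → ℕ)
    (hc : IsSubmodMaxChain n s c lab) :
    Function.Injective lab ∧ (∀ k, lab k ≤ n) ∧
    -- each simple transposition appears exactly once: the word is a Coxeter word
    (List.ofFn lab).Perm (List.range (n + 1)) ∧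
    -- the word is reduced: no strictly shorter word in the generators has the same
    -- product
    (∀ l : List ℕ, (∀ j ∈ l, j ≤ n) →
      (l.map (adjTrans n)).prod = ((List.ofFn lab).map (adjTrans n)).prod →
      n + 1 ≤ l.length) := by
  obtain ⟨h0, htop, _, hstep⟩ := hc
  -- monotonicity
  have mono : ∀ b (hb : b < n + 2) a (ha : a ≤ b), c ⟨a, by omega⟩ ⊆ c ⟨b, hb⟩ := by
    intro b
    induction b with
    | zero => intro _ a ha; interval_cases a; exact subset_rfl
    | succ b ih =>
      intro hb a ha
      rcases Nat.lt_or_ge a (b + 1) with h | h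
      · have hsub : c ⟨a, by omega⟩ ⊆ c ⟨b, by omega⟩ := ih (by omega) a (by omega)
        refine hsub.trans ?_
        have := (hstep ⟨b, by omega⟩).2
        have hcs : (⟨b, by omega⟩ : Fin (n+1)).castSucc = (⟨b, by omega⟩ : Fin (n+2)) := rfl
        have hsc : (⟨b, by omega⟩ : Fin (n+1)).succ = (⟨b + 1, hb⟩ : Fin (n+2)) := rfl
        rw [hcs, hsc] at this
        rw [this]
        exact Finset.subset_insert _ _
      · have : a = b + 1 := by omega
        subst this; exact subset_rfl
  have mono' : ∀ p q : Fin (n + 2), p ≤ q → c p ⊆ c q := by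
    intro p q hpq
    have := mono q.val q.isLt p.val hpq
    simpa using this
  -- lab k ∈ c k.succ
  have hmem : ∀ k : Fin (n + 1), lab k ∈ c k.succ := by
    intro k; rw [(hstep k).2]; exact Finset.mem_insert_self _ _
  -- labels ≤ n
  have hle : ∀ k, lab k ≤ n := by
    intro k
    have := mono' k.succ (Fin.last (n+1)) (Fin.le_last _) (hmem k)
    rw [htop] at this
    have := Finset.mem_range.mp this
    omega
  -- injectivity
  have hlt : ∀ k k' : Fin (n + 1), k < k' → lab k ≠ lab k' := by
    intro k k' hkk' heq
    have hsub : c k.succ ⊆ c k'.castSucc := by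
      apply mono'
      rw [Fin.le_def]
      have h1 : (k.succ : Fin (n+2)).val = k.val + 1 := rfl
      have h2 : (k'.castSucc : Fin (n+2)).val = k'.val := rfl
      rw [h1, h2]
      exact hkk'
    exact (hstep k').1 (heq ▸ hsub (hmem k))
  have hinj : Function.Injective lab := by
    intro k k' h
    rcases lt_trichotomy k k' with hl | hl | hl
    · exact absurd h (hlt k k' hl)
    · exact hl
    · exact absurd h.symm (hlt k' k hl)
  -- permutation
  have hperm : (List.ofFn lab).Perm (List.range (n + 1)) := by
    have hnd : (List.ofFn lab).Nodup := List.nodup_ofFn.mpr hinj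
    have hsub : (List.ofFn lab) ⊆ List.range (n + 1) := by
      intro x hx
      obtain ⟨i, hi⟩ := Set.mem_range.mp ((List.mem_ofFn' _ _).mp hx)
      rw [List.mem_range]
      have := hle i
      omega
    exact (hnd.subperm hsub).perm_of_length_le (by simp)
  refine ⟨hinj, hle, hperm, ?_⟩
  -- reducedness
  intro l hlmem heq
  by_contra hlen
  push_neg at hlen
  -- find a missing generator j
  have : ∃ j, j ≤ n ∧ j ∉ l := by
    by_contra hall
    push_neg at hall
    have hsub : Finset.range (n + 1) ⊆ l.toFinset := by
      intro j hj
      rw [List.mem_toFinset]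
      exact hall j (by have := Finset.mem_range.mp hj; omega)
    have h1 : n + 1 ≤ l.toFinset.card := by
      simpa using Finset.card_le_card hsub
    have h2 : l.toFinset.card ≤ l.length := l.toFinset_card_le
    omega
  obtain ⟨j, hj, hjl⟩ := this
  -- l's product preserves level j
  have hP := fun x => prodLevel l hlmem hjl x
  -- the Coxeter word does not
  have hjmem : j ∈ List.ofFn lab := hperm.mem_iff.mpr (List.mem_range.mpr (by omega))
  obtain ⟨a, b, hab⟩ := List.append_of_mem hjmem
  have hnd : (List.ofFn lab).Nodup := List.nodup_ofFn.mpr hinj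
  rw [hab] at hnd
  rw [List.nodup_append] at hnd
  obtain ⟨hna, hnb, hdisj⟩ := hnd
  have hja : j ∉ a := fun h => hdisj j h j (by simp) rfl
  have hjb : j ∉ b := by
    have := List.nodup_cons.mp hnb
    exact this.1
  have hble : ∀ i ∈ b, i ≤ n := by
    intro i hi
    obtain ⟨k, hk⟩ := Set.mem_range.mp ((List.mem_ofFn' _ _).mp (by rw [hab]; simp [hi] : i ∈ List.ofFn lab))
    exact hk ▸ hle k
  have hale : ∀ i ∈ a, i ≤ n := by
    intro i hi
    obtain ⟨k, hk⟩ := Set.mem_range.mp ((List.mem_ofFn' _ _).mp (by rw [hab]; simp [hi] : i ∈ List.ofFn lab))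
    exact hk ▸ hle k
  set A := (a.map (adjTrans n)).prod with hA
  set B := (b.map (adjTrans n)).prod with hB
  have hprod : ((List.ofFn lab).map (adjTrans n)).prod = A * (adjTrans n j * B) := by
    rw [hab]
    simp [List.prod_append, mul_assoc]; rfl
  set x : Fin (n + 2) := B⁻¹ (Fin.ofNat (n + 2) j) with hx
  have hxval : x.val ≤ j := by
    have hBx : B x = Fin.ofNat (n+2) j := by simp [hx]
    have := prodLevel b hble hjb x
    rw [← hB, hBx] at this
    rw [← this, Fin.val_ofNat, Nat.mod_eq_of_lt (by omega : j < n + 2)]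
  have hjj : adjTrans n j (Fin.ofNat (n+2) j) = Fin.ofNat (n + 2) (j + 1) := by
    unfold adjTrans; exact Equiv.swap_apply_left _ _
  have hcontr : ¬ ((((List.ofFn lab).map (adjTrans n)).prod x).val ≤ j) := by
    rw [hprod]
    simp only [Equiv.Perm.mul_apply]
    have hBx : B x = Fin.ofNat (n+2) j := by simp [hx]
    rw [hBx, hjj]
    have := prodLevel a hale hja (Fin.ofNat (n + 2) (j + 1))
    rw [← hA] at this
    rw [this, Fin.val_ofNat, Nat.mod_eq_of_lt (by omega : j + 1 < n + 2)]
    omega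
  rw [← heq] at hcontr
  exact hcontr ((hP x).mpr hxval)
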